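/- arXiv:math/0604408 — 2 statements merged into one kernel-verified Lean document; each statement's English description precedes it below -/
import Mathlib

section
/- Let J be a real 4×4 matrix with J·J = −I₄, and let g and g′ be real symmetric positive definite 4×4 matrices compatible with J, i.e. JᵀgJ = g and Jᵀg′J = g′. Then for every real number F: det g′ = e^{2F} · det g if and only if tr(g⁻¹ g′) = e^{F} · tr(g′⁻¹ g). -/
open Matrix

private lemma posDef_conj {n : ℕ} {Q A : Matrix (Fin n) (Fin n) ℝ} (hA : A.PosDef)
    (hQ : IsUnit Q.det) : (Qᵀ * A * Q).PosDef := by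
  refine Matrix.PosDef.of_dotProduct_mulVec_pos (Matrix.isHermitian_conjTranspose_mul_mul Q hA.1 : _) fun x hx => ?_
  have hQU : IsUnit Q := (Matrix.isUnit_iff_isUnit_det Q).2 hQ
  have hx' : Q *ᵥ x ≠ 0 := fun h => hx <| by
    have := Matrix.mulVec_injective_iff_isUnit.2 hQU (a₁ := x) (a₂ := 0)
    simpa [h] using this
  have h2 := hA.dotProduct_mulVec_pos hx'
  have key : star x ⬝ᵥ ((Qᵀ * A * Q) *ᵥ x) = star (Q *ᵥ x) ⬝ᵥ (A *ᵥ (Q *ᵥ x)) := by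
    rw [← Matrix.mulVec_mulVec, ← Matrix.mulVec_mulVec, star_mulVec,
      Matrix.dotProduct_mulVec (star x), Matrix.vecMul_transpose]
    simp [Matrix.vecMul_transpose]
  rw [key]; exact h2

set_option maxHeartbeats 1000000 in
/-- Core lemma: a symmetric positive definite real 4×4 matrix commuting with an
orthogonal complex structure has `det B = δ²`, `tr B⁻¹ · δ = tr B` for some `δ > 0`. -/
private lemma core {B K : Matrix (Fin 4) (Fin 4) ℝ} (hB : B.PosDef) (hBs : Bᵀ = B)
    (hKo : Kᵀ * K = 1) (hK2 : K * K = -1) (hcomm : B * K = K * B) :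
    ∃ δ : ℝ, 0 < δ ∧ B.det = δ ^ 2 ∧ Matrix.trace B⁻¹ * δ = Matrix.trace B ∧
      0 < Matrix.trace B⁻¹ := by
  -- transpose of K is -K
  have hKT : Kᵀ = -K := by
    have h1 : K * (-K) = 1 := by rw [Matrix.mul_neg, hK2]; simp
    calc Kᵀ = Kᵀ * (K * (-K)) := by rw [h1, Matrix.mul_one]
    _ = (Kᵀ * K) * (-K) := by rw [Matrix.mul_assoc]
    _ = -K := by rw [hKo, Matrix.one_mul]
  -- vector-level facts
  have hK2v : ∀ v : Fin 4 → ℝ, K *ᵥ (K *ᵥ v) = -v := by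
    intro v; rw [Matrix.mulVec_mulVec, hK2]; simp [Matrix.neg_mulVec]
  have sym : ∀ u v : Fin 4 → ℝ, u ⬝ᵥ (B *ᵥ v) = v ⬝ᵥ (B *ᵥ u) := by
    intro u v
    rw [Matrix.dotProduct_mulVec]
    conv_lhs => rw [← hBs]
    rw [Matrix.vecMul_transpose, dotProduct_comm]
  have skw : ∀ u v : Fin 4 → ℝ, u ⬝ᵥ (K *ᵥ v) = -((K *ᵥ u) ⬝ᵥ v) := by
    intro u v
    have huK : u ᵥ* K = -(K *ᵥ u) := by
      have h := congrArg (fun M => u ᵥ* M) hKT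
      simp only [Matrix.vecMul_transpose, Matrix.vecMul_neg] at h
      rw [h]; simp
    rw [Matrix.dotProduct_mulVec, huK, neg_dotProduct]
  have ort : ∀ u v : Fin 4 → ℝ, (K *ᵥ u) ⬝ᵥ (K *ᵥ v) = u ⬝ᵥ v := by
    intro u v
    have := skw u (K *ᵥ v)
    rw [hK2v v] at this
    simp only [dotProduct_neg] at this
    linarith
  have cmB : ∀ v : Fin 4 → ℝ, B *ᵥ (K *ᵥ v) = K *ᵥ (B *ᵥ v) := by
    intro v; rw [Matrix.mulVec_mulVec, Matrix.mulVec_mulVec, hcomm]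
  -- construct adapted orthonormal basis
  set v1 : Fin 4 → ℝ := ![1, 0, 0, 0] with hv1
  set v2 : Fin 4 → ℝ := K *ᵥ v1 with hv2
  -- find w ≠ 0 orthogonal to v1, v2
  obtain ⟨w, hw0, hwv1, hwv2⟩ : ∃ w : Fin 4 → ℝ, w ≠ 0 ∧ v1 ⬝ᵥ w = 0 ∧ v2 ⬝ᵥ w = 0 := by
    set M : Matrix (Fin 2) (Fin 4) ℝ := Matrix.of ![v1, v2] with hM
    have hni : ¬ Function.Injective M.mulVecLin := by
      intro hinj
      have := LinearMap.finrank_le_finrank_of_injective hinj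
      simp [Module.finrank_fin_fun] at this
    rw [Function.not_injective_iff] at hni
    obtain ⟨x, y, hxy, hne⟩ := hni
    refine ⟨x - y, sub_ne_zero.2 hne, ?_, ?_⟩
    · have h0 : M *ᵥ (x - y) = 0 := by
        rw [Matrix.mulVec_sub]
        simpa [Matrix.mulVecLin_apply, sub_eq_zero] using hxy
      have := congrFun h0 0
      simpa [hM, Matrix.mulVec, dotProduct_comm] using this
    · have h0 : M *ᵥ (x - y) = 0 := by
        rw [Matrix.mulVec_sub]
        simpa [Matrix.mulVecLin_apply, sub_eq_zero] using hxy
      have := congrFun h0 1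
      simpa [hM, Matrix.mulVec, dotProduct_comm] using this
  -- normalize w
  have hww : 0 < w ⬝ᵥ w := by
    have hnn : 0 ≤ w ⬝ᵥ w := Finset.sum_nonneg fun i _ => mul_self_nonneg _
    rcases lt_or_eq_of_le hnn with h | h
    · exact h
    · exact absurd ((dotProduct_self_eq_zero).1 h.symm) hw0
  set c : ℝ := Real.sqrt (w ⬝ᵥ w) with hcdef
  have hc : 0 < c := Real.sqrt_pos.2 hww
  have hc2 : c * c = w ⬝ᵥ w := Real.mul_self_sqrt hww.le
  set v3 : Fin 4 → ℝ := c⁻¹ • w with hv3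
  set v4 : Fin 4 → ℝ := K *ᵥ v3 with hv4
  -- orthonormality facts
  have f11 : v1 ⬝ᵥ v1 = 1 := by simp [hv1, dotProduct, Fin.sum_univ_four]
  have f12 : v1 ⬝ᵥ v2 = 0 := by
    have h := skw v1 v1
    rw [dotProduct_comm (K *ᵥ v1) v1] at h
    rw [hv2]; linarith
  have f13 : v1 ⬝ᵥ v3 = 0 := by
    rw [hv3, dotProduct_smul, hwv1]; simp
  have f23 : v2 ⬝ᵥ v3 = 0 := by
    rw [hv3, dotProduct_smul, hwv2]; simp
  have f14 : v1 ⬝ᵥ v4 = 0 := by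
    rw [hv4, skw v1 v3, ← hv2, f23, neg_zero]
  have f22 : v2 ⬝ᵥ v2 = 1 := by rw [hv2, ort]; exact f11
  have f24 : v2 ⬝ᵥ v4 = 0 := by rw [hv2, hv4, ort]; exact f13
  have f33 : v3 ⬝ᵥ v3 = 1 := by
    rw [hv3, dotProduct_smul, smul_dotProduct, smul_eq_mul, smul_eq_mul, ← mul_assoc]
    rw [← hc2]; field_simp
  have f34 : v3 ⬝ᵥ v4 = 0 := by
    have h := skw v3 v3
    rw [dotProduct_comm (K *ᵥ v3) v3] at h
    rw [hv4]; linarith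
  have f44 : v4 ⬝ᵥ v4 = 1 := by rw [hv4, ort]; exact f33
  -- the orthogonal change-of-basis matrix
  set Q : Matrix (Fin 4) (Fin 4) ℝ := Matrix.of (fun i j => ![v1, v2, v3, v4] j i) with hQdef
  have hent : ∀ (A : Matrix (Fin 4) (Fin 4) ℝ) (i j : Fin 4),
      (Qᵀ * A * Q) i j = (![v1, v2, v3, v4] i) ⬝ᵥ (A *ᵥ ![v1, v2, v3, v4] j) := by
    intro A i j
    simp only [hQdef, Matrix.mul_apply, Matrix.transpose_apply, Matrix.mulVec, dotProduct,
      Matrix.of_apply, Finset.sum_mul, Finset.mul_sum]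
    rw [Finset.sum_comm]
    exact Finset.sum_congr rfl fun k _ => Finset.sum_congr rfl fun l _ => by ring
  have hQ1 : Qᵀ * Q = 1 := by
    ext i j
    have h' := hent 1 i j
    rw [Matrix.mul_one] at h'
    rw [h']
    have f21 : v2 ⬝ᵥ v1 = 0 := by rw [dotProduct_comm]; exact f12
    have f31 : v3 ⬝ᵥ v1 = 0 := by rw [dotProduct_comm]; exact f13
    have f41 : v4 ⬝ᵥ v1 = 0 := by rw [dotProduct_comm]; exact f14
    have f32 : v3 ⬝ᵥ v2 = 0 := by rw [dotProduct_comm]; exact f23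
    have f42 : v4 ⬝ᵥ v2 = 0 := by rw [dotProduct_comm]; exact f24
    have f43 : v4 ⬝ᵥ v3 = 0 := by rw [dotProduct_comm]; exact f34
    fin_cases i <;> fin_cases j <;>
      simp [Matrix.one_mulVec, Matrix.one_apply,
        f11, f12, f13, f14, f21, f22, f23, f24, f31, f32, f33, f34, f41, f42, f43, f44]
  have hQQ : Q * Qᵀ = 1 := mul_eq_one_comm.1 hQ1
  have hdet1 : Q.det * Q.det = 1 := by
    have := congrArg Matrix.det hQ1
    rwa [Matrix.det_mul, Matrix.det_transpose, Matrix.det_one] at this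
  have hdetQ : IsUnit Q.det := isUnit_iff_ne_zero.2 (by intro h; rw [h] at hdet1; simp at hdet1)
  -- entries of the transformed matrix
  set a : ℝ := v1 ⬝ᵥ (B *ᵥ v1) with ha
  set d : ℝ := v3 ⬝ᵥ (B *ᵥ v3) with hd
  set p : ℝ := v1 ⬝ᵥ (B *ᵥ v3) with hp
  set q : ℝ := v1 ⬝ᵥ (B *ᵥ v4) with hq
  have e01 : v1 ⬝ᵥ (B *ᵥ v2) = 0 := by
    have h1 : v1 ⬝ᵥ (B *ᵥ v2) = -(v2 ⬝ᵥ (B *ᵥ v1)) := by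
      rw [hv2, cmB, skw]
    have h2 := sym v2 v1
    rw [h2] at h1; linarith
  have e11 : v2 ⬝ᵥ (B *ᵥ v2) = a := by rw [hv2, cmB, ort]
  have e12 : v2 ⬝ᵥ (B *ᵥ v3) = -q := by
    have h1 : q = -(v2 ⬝ᵥ (B *ᵥ v3)) := by rw [hq, hv4, cmB, skw, hv2]
    linarith
  have e13 : v2 ⬝ᵥ (B *ᵥ v4) = p := by rw [hv2, hv4, cmB, ort, ← hp]
  have e23 : v3 ⬝ᵥ (B *ᵥ v4) = 0 := by
    have h1 : v3 ⬝ᵥ (B *ᵥ v4) = -(v4 ⬝ᵥ (B *ᵥ v3)) := by rw [hv4, cmB, skw]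
    have h2 := sym v4 v3
    rw [h2] at h1; linarith
  have e33 : v4 ⬝ᵥ (B *ᵥ v4) = d := by rw [hv4, cmB, ort]
  have e10 : v2 ⬝ᵥ (B *ᵥ v1) = 0 := by rw [sym]; exact e01
  have e20 : v3 ⬝ᵥ (B *ᵥ v1) = p := by rw [sym]
  have e30 : v4 ⬝ᵥ (B *ᵥ v1) = q := by rw [sym]
  have e21 : v3 ⬝ᵥ (B *ᵥ v2) = -q := by rw [sym]; exact e12
  have e31 : v4 ⬝ᵥ (B *ᵥ v2) = p := by rw [sym]; exact e13
  have e32 : v4 ⬝ᵥ (B *ᵥ v3) = 0 := by rw [sym]; exact e23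
  -- the explicit form of the transformed matrix
  have hE : Qᵀ * B * Q = !![a,0,p,q; 0,a,-q,p; p,-q,d,0; q,p,0,d] := by
    ext i j
    rw [hent B i j]
    fin_cases i <;> fin_cases j <;>
      simp [e01, e11, e12, e13, e23, e33, e10, e20, e30, e21, e31, e32, ← ha, ← hd, ← hp, ← hq]
  set E : Matrix (Fin 4) (Fin 4) ℝ := !![a,0,p,q; 0,a,-q,p; p,-q,d,0; q,p,0,d] with hEdef
  have hEP : E.PosDef := hE ▸ posDef_conj hB hdetQ
  set δ : ℝ := a * d - p ^ 2 - q ^ 2 with hδdef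
  have hdetE : E.det = δ ^ 2 := by
    rw [hEdef, hδdef]
    simp [Matrix.det_succ_row_zero, Fin.sum_univ_succ, Fin.succAbove]
    ring
  have ha0 : 0 < a := by
    have hx : (![1,0,0,0] : Fin 4 → ℝ) ≠ 0 := by
      intro h; have := congrFun h 0; norm_num at this
    have h := hEP.dotProduct_mulVec_pos hx
    have hval : star (![1,0,0,0] : Fin 4 → ℝ) ⬝ᵥ (E *ᵥ ![1,0,0,0]) = a := by
      simp [hEdef, Matrix.mulVec, dotProduct, Fin.sum_univ_four]
    rwa [hval] at h
  have hd0 : 0 < d := by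
    have hx : (![0,0,1,0] : Fin 4 → ℝ) ≠ 0 := by
      intro h; have := congrFun h 2; simp at this
    have h := hEP.dotProduct_mulVec_pos hx
    have hval : star (![0,0,1,0] : Fin 4 → ℝ) ⬝ᵥ (E *ᵥ ![0,0,1,0]) = d := by
      simp [hEdef, Matrix.mulVec, dotProduct, Fin.sum_univ_four]
    rwa [hval] at h
  have hδ0 : 0 < δ := by
    have hx : (![d,0,-p,-q] : Fin 4 → ℝ) ≠ 0 := by
      intro h; have := congrFun h 0; simp at this; exact hd0.ne' this
    have h := hEP.dotProduct_mulVec_pos hx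
    have hval : star (![d,0,-p,-q] : Fin 4 → ℝ) ⬝ᵥ (E *ᵥ ![d,0,-p,-q]) = d * δ := by
      simp [hEdef, hδdef, Matrix.mulVec, dotProduct, Fin.sum_univ_four]
      ring
    rw [hval] at h
    by_contra hcon
    push_neg at hcon
    have : d * δ ≤ 0 := mul_nonpos_of_nonneg_of_nonpos hd0.le hcon
    linarith
  have htrE : E.trace = 2 * (a + d) := by
    rw [hEdef]; simp [Matrix.trace, Matrix.diag, Fin.sum_univ_four]; ring
  set M : Matrix (Fin 4) (Fin 4) ℝ := !![d,0,-p,-q; 0,d,q,-p; -p,q,a,0; -q,-p,0,a] with hMdef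
  have hEM : E * M = δ • (1 : Matrix (Fin 4) (Fin 4) ℝ) := by
    rw [hEdef, hMdef, hδdef]
    ext i j
    fin_cases i <;> fin_cases j <;>
      simp [Matrix.mul_apply, Fin.sum_univ_four, Matrix.one_apply] <;> ring
  have hEinv : E⁻¹ = δ⁻¹ • M := by
    apply Matrix.inv_eq_right_inv
    rw [Matrix.mul_smul, hEM, smul_smul, inv_mul_cancel₀ hδ0.ne', one_smul]
  have htrM : M.trace = 2 * (a + d) := by
    rw [hMdef]; simp [Matrix.trace, Matrix.diag, Fin.sum_univ_four]; ring
  -- transfer to B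
  have hBdetU : IsUnit B.det := isUnit_iff_ne_zero.2 hB.det_pos.ne'
  have hdetB : B.det = δ ^ 2 := by
    have hEB : E.det = B.det := by
      rw [← hE, Matrix.det_mul, Matrix.det_mul, Matrix.det_transpose]
      linear_combination B.det * hdet1
    rw [← hEB, hdetE]
  have htrB : Matrix.trace B = 2 * (a + d) := by
    have : E.trace = B.trace := by
      rw [← hE, Matrix.trace_mul_cycle, hQQ, Matrix.one_mul]
    rw [← this, htrE]
  have hEinvB : E⁻¹ = Qᵀ * B⁻¹ * Q := by
    apply Matrix.inv_eq_right_inv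
    rw [← hE]
    simp only [Matrix.mul_assoc]
    rw [← Matrix.mul_assoc Q Qᵀ (B⁻¹ * Q), hQQ, Matrix.one_mul,
      Matrix.mul_nonsing_inv_cancel_left B Q hBdetU, hQ1]
  have htrBinv : Matrix.trace B⁻¹ = δ⁻¹ * (2 * (a + d)) := by
    have h1 : Matrix.trace E⁻¹ = Matrix.trace B⁻¹ := by
      rw [hEinvB, Matrix.trace_mul_cycle, hQQ, Matrix.one_mul]
    rw [← h1, hEinv, Matrix.trace_smul, htrM, smul_eq_mul]
  refine ⟨δ, hδ0, hdetB, ?_, ?_⟩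
  · rw [htrBinv, htrB]; field_simp
  · rw [htrBinv]
    exact mul_pos (inv_pos.2 hδ0) (by linarith)

set_option maxHeartbeats 1000000 in
/-- Pointwise linear-algebra form of the equivalence between the two forms of the
Calabi-Yau equation on an almost-Kähler 4-manifold: for a linear almost complex
structure `J` (`J² = −I₄`) and `J`-compatible symmetric positive definite matrices
`g`, `g'`, one has `det g' = e^{2F} det g` iff `tr(g⁻¹g') = e^F tr(g'⁻¹g)`. -/
theorem calabi_yau_eq_iff_trace_eq (J g g' : Matrix (Fin 4) (Fin 4) ℝ)
    (hJ2 : J * J = -1)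
    (hg_symm : g.IsSymm) (hg : g.PosDef) (hJg : Jᵀ * g * J = g)
    (hg'_symm : g'.IsSymm) (hg' : g'.PosDef) (hJg' : Jᵀ * g' * J = g')
    (F : ℝ) :
    g'.det = Real.exp (2 * F) * g.det ↔
      Matrix.trace (g⁻¹ * g') = Real.exp F * Matrix.trace (g'⁻¹ * g) := by
  -- the symmetric positive square root of g
  set S : Matrix (Fin 4) (Fin 4) ℝ := (open scoped MatrixOrder in CFC.sqrt g) with hSdef
  have hS2 : S * S = g := by
    open scoped MatrixOrder in exact CFC.sqrt_mul_sqrt_self g hg.posSemidef.nonneg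
  have hSH : Sᵀ = S := by
    rw [← Matrix.conjTranspose_eq_transpose_of_trivial]
    open scoped MatrixOrder in exact (CFC.sqrt_nonneg g).posSemidef.1
  have hdetg : 0 < g.det := hg.det_pos
  have hdetS2 : S.det * S.det = g.det := by rw [← Matrix.det_mul, hS2]
  have hdetSU : IsUnit S.det := isUnit_iff_ne_zero.2 (by
    intro h; rw [h, mul_zero] at hdetS2; exact hdetg.ne' hdetS2.symm)
  have hdetgU : IsUnit g.det := isUnit_iff_ne_zero.2 hdetg.ne'
  have hdetg'U : IsUnit g'.det := isUnit_iff_ne_zero.2 hg'.det_pos.ne'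
  have hSinv : S⁻¹ * S = 1 := Matrix.nonsing_inv_mul S hdetSU
  have hSinv' : S * S⁻¹ = 1 := Matrix.mul_nonsing_inv S hdetSU
  have hSiT : (S⁻¹)ᵀ = S⁻¹ := by rw [Matrix.transpose_nonsing_inv, hSH]
  have hginv : g⁻¹ = S⁻¹ * S⁻¹ := by rw [← hS2, Matrix.mul_inv_rev]
  set B : Matrix (Fin 4) (Fin 4) ℝ := S⁻¹ * g' * S⁻¹ with hBdef
  set K : Matrix (Fin 4) (Fin 4) ℝ := S * J * S⁻¹ with hKdef
  have hg'T : g'ᵀ = g' := hg'_symm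
  have hBs : Bᵀ = B := by
    rw [hBdef, Matrix.transpose_mul, Matrix.transpose_mul, hSiT, hg'T, Matrix.mul_assoc]
  have hdetSiU : IsUnit (S⁻¹).det := by
    rw [Matrix.det_nonsing_inv]
    exact isUnit_ringInverse.2 hdetSU
  have hBP : B.PosDef := by
    have h := posDef_conj hg' hdetSiU
    rw [hSiT] at h
    rw [hBdef]; exact h
  have hKT : Kᵀ = S⁻¹ * Jᵀ * S := by
    rw [hKdef, Matrix.transpose_mul, Matrix.transpose_mul, hSiT, hSH, Matrix.mul_assoc]
  have hKo : Kᵀ * K = 1 := by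
    calc Kᵀ * K = S⁻¹ * (Jᵀ * ((S * S) * (J * S⁻¹))) := by
          rw [hKT, hKdef]; simp only [Matrix.mul_assoc]
    _ = S⁻¹ * (Jᵀ * (g * (J * S⁻¹))) := by rw [hS2]
    _ = S⁻¹ * ((Jᵀ * g * J) * S⁻¹) := by simp only [Matrix.mul_assoc]
    _ = S⁻¹ * (g * S⁻¹) := by rw [hJg]
    _ = S⁻¹ * ((S * S) * S⁻¹) := by rw [hS2]
    _ = S⁻¹ * (S * (S * S⁻¹)) := by simp only [Matrix.mul_assoc]
    _ = 1 := by rw [hSinv', Matrix.mul_one, hSinv]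
  have hK2 : K * K = -1 := by
    calc K * K = S * (J * ((S⁻¹ * S) * (J * S⁻¹))) := by
          rw [hKdef]; simp only [Matrix.mul_assoc]
    _ = S * (J * (J * S⁻¹)) := by rw [hSinv, Matrix.one_mul]
    _ = S * ((J * J) * S⁻¹) := by simp only [Matrix.mul_assoc]
    _ = S * (-1 * S⁻¹) := by rw [hJ2]
    _ = -(S * S⁻¹) := by rw [Matrix.neg_mul, Matrix.one_mul, Matrix.mul_neg]
    _ = -1 := by rw [hSinv']
  -- the compatibility relations give that g⁻¹g' commutes with J, in the form below
  have h1 : Jᵀ * g' = -(g' * J) := by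
    have h := congrArg (fun X => X * J) hJg'
    simp only [Matrix.mul_assoc] at h
    rw [hJ2, Matrix.mul_neg, Matrix.mul_one, Matrix.mul_neg] at h
    rw [← h, neg_neg]
  have h2 : Jᵀ * g = -(g * J) := by
    have h := congrArg (fun X => X * J) hJg
    simp only [Matrix.mul_assoc] at h
    rw [hJ2, Matrix.mul_neg, Matrix.mul_one, Matrix.mul_neg] at h
    rw [← h, neg_neg]
  have hJT : Jᵀ = -(g * J * g⁻¹) := by
    calc Jᵀ = Jᵀ * (g * g⁻¹) := by rw [Matrix.mul_nonsing_inv g hdetgU, Matrix.mul_one]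
    _ = (Jᵀ * g) * g⁻¹ := by rw [Matrix.mul_assoc]
    _ = -(g * J * g⁻¹) := by rw [h2, Matrix.neg_mul]
  have h3 : g * J * g⁻¹ * g' = g' * J := by
    have h := h1
    rw [hJT, Matrix.neg_mul] at h
    exact neg_inj.1 h
  have hcomm : B * K = K * B := by
    calc B * K = S⁻¹ * (g' * ((S⁻¹ * S) * (J * S⁻¹))) := by
          rw [hBdef, hKdef]; simp only [Matrix.mul_assoc]
    _ = S⁻¹ * (g' * (J * S⁻¹)) := by rw [hSinv, Matrix.one_mul]
    _ = S⁻¹ * ((g' * J) * S⁻¹) := by simp only [Matrix.mul_assoc]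
    _ = S⁻¹ * ((g * J * g⁻¹ * g') * S⁻¹) := by rw [h3]
    _ = (S⁻¹ * (S * S)) * (J * (g⁻¹ * (g' * S⁻¹))) := by
          rw [hS2]; simp only [Matrix.mul_assoc]
    _ = ((S⁻¹ * S) * S) * (J * (g⁻¹ * (g' * S⁻¹))) := by simp only [Matrix.mul_assoc]
    _ = S * (J * (g⁻¹ * (g' * S⁻¹))) := by rw [hSinv, Matrix.one_mul]
    _ = K * B := by rw [hKdef, hBdef, hginv]; simp only [Matrix.mul_assoc]
  -- trace and determinant identifications
  have htr1 : Matrix.trace (g⁻¹ * g') = Matrix.trace B := by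
    rw [hginv, hBdef]
    exact (Matrix.trace_mul_cycle S⁻¹ g' S⁻¹).symm
  have hBinv : B⁻¹ = S * g'⁻¹ * S := by
    apply Matrix.inv_eq_right_inv
    rw [hBdef]
    calc S⁻¹ * g' * S⁻¹ * (S * g'⁻¹ * S) = S⁻¹ * (g' * ((S⁻¹ * S) * (g'⁻¹ * S))) := by
          simp only [Matrix.mul_assoc]
    _ = S⁻¹ * (g' * (g'⁻¹ * S)) := by rw [hSinv, Matrix.one_mul]
    _ = S⁻¹ * S := by rw [Matrix.mul_nonsing_inv_cancel_left g' S hdetg'U]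
    _ = 1 := hSinv
  have htr2 : Matrix.trace (g'⁻¹ * g) = Matrix.trace B⁻¹ := by
    rw [hBinv, Matrix.trace_mul_cycle S g'⁻¹ S, hS2]
    exact Matrix.trace_mul_comm g'⁻¹ g
  have hg'B : S * B * S = g' := by
    rw [hBdef]
    calc S * (S⁻¹ * g' * S⁻¹) * S = (S * S⁻¹) * (g' * (S⁻¹ * S)) := by
          simp only [Matrix.mul_assoc]
    _ = g' := by rw [hSinv, hSinv', Matrix.one_mul, Matrix.mul_one]
  have hgB : g'.det = g.det * B.det := by
    have h := congrArg Matrix.det hg'B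
    rw [Matrix.det_mul, Matrix.det_mul] at h
    linear_combination B.det * hdetS2 - h
  obtain ⟨δ, hδ0, hBd, hBtr, hBtrinv⟩ := core hBP hBs hKo hK2 hcomm
  have hexp : Real.exp (2 * F) = (Real.exp F) ^ 2 := by
    rw [two_mul, Real.exp_add, sq]
  constructor
  · intro h
    have hBdet : B.det = Real.exp (2 * F) := by
      rw [hgB] at h
      have := mul_left_cancel₀ hdetg.ne' (h.trans (mul_comm _ _))
      exact this
    have h1 : δ ^ 2 = (Real.exp F) ^ 2 := by rw [← hBd, hBdet, hexp]
    have h4 : (δ - Real.exp F) * (δ + Real.exp F) = 0 := by linear_combination h1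
    have hδe : δ = Real.exp F := by
      rcases mul_eq_zero.1 h4 with h5 | h5
      · linarith
      · have := Real.exp_pos F; linarith
    rw [htr1, htr2, ← hBtr, ← hδe]
    ring
  · intro h
    rw [htr1, htr2] at h
    have h2 : Matrix.trace B⁻¹ * δ = Matrix.trace B⁻¹ * Real.exp F := by
      rw [hBtr, h]; ring
    have hδe : δ = Real.exp F := mul_left_cancel₀ hBtrinv.ne' h2
    rw [hgB, hBd, hδe, hexp]
    ring
end

section
/- Let J be a real 4×4 matrix with J·J = −I₄, and let g and g′ be real symmetric positive definite 4×4 matrices compatible with J, i.e. JᵀgJ = g and Jᵀg′J = g′. Then there exist real numbers λ₁ ≥ λ₂ > 0 such that the characteristic polynomial of g⁻¹g′ equals ((X − λ₁)(X − λ₂))²; in particular, every eigenvalue of g⁻¹g′ is a positive real occurring with even algebraic multiplicity. -/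
open Matrix Polynomial Finset
open scoped MatrixOrder

section Aux

variable {n : Type*} [Fintype n] [DecidableEq n]

/-- Characteristic polynomial is invariant under conjugation. -/
lemma my_charpoly_conj {R : Type*} [CommRing R] (P B : Matrix n n R) (hP : IsUnit P) :
    (P * B * P⁻¹).charpoly = B.charpoly := by
  obtain ⟨u, rfl⟩ := hP
  rw [← Matrix.coe_units_inv u]
  set mc : Matrix n n R →+* Matrix n n R[X] := (C : R →+* R[X]).mapMatrix with hmc
  have hone : mc (u : Matrix n n R) * mc ((↑u⁻¹ : Matrix n n R)) = 1 := by
    have h1 : ((u : Matrix n n R) * (↑u⁻¹ : Matrix n n R)) = 1 := by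
      exact_mod_cast Units.mul_inv u
    rw [← _root_.map_mul, h1, _root_.map_one]
  have key : charmatrix ((↑u : Matrix n n R) * B * (↑u⁻¹ : Matrix n n R))
      = mc (u : Matrix n n R) * charmatrix B * mc ((↑u⁻¹ : Matrix n n R)) := by
    rw [charmatrix, charmatrix, mul_sub, sub_mul]
    have hsc := (Matrix.scalar_commute (n := n) (X : R[X])
      (fun r' => Commute.all _ _) (mc (u : Matrix n n R))).eq
    congr 1
    · symm
      rw [← hsc, Matrix.mul_assoc, hone, Matrix.mul_one]
    · rw [hmc]
      simp [_root_.map_mul]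
  rw [Matrix.charpoly, Matrix.charpoly, key, det_mul, det_mul,
    mul_comm (det (mc (u : Matrix n n R))) (det (charmatrix B)), mul_assoc, ← det_mul, hone]
  simp

/-- A real matrix squaring to `-1` lives on an even-dimensional space. -/
lemma even_card_of_sq_eq_neg_one (L : Matrix n n ℝ) (h : L * L = -1) :
    Even (Fintype.card n) := by
  have hd : L.det * L.det = (-1 : ℝ) ^ Fintype.card n := by
    rw [← det_mul, h]
    have : (-1 : Matrix n n ℝ) = -(1 : Matrix n n ℝ) := by simp
    rw [this, det_neg]
    simp
  by_contra hodd
  rw [Nat.not_even_iff_odd] at hodd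
  rw [hodd.neg_one_pow] at hd
  nlinarith [mul_self_nonneg L.det]

/-- If `L` squares to `-1` and commutes with `diagonal d`, then each level set of `d`
has even cardinality. -/
lemma even_card_level_set (d : n → ℝ) (L : Matrix n n ℝ) (hL : L * L = -1)
    (hcomm : L * diagonal d = diagonal d * L) (t : ℝ) :
    Even (Finset.univ.filter (fun i => d i = t)).card := by
  classical
  have hzero : ∀ i j, d i ≠ d j → L i j = 0 := by
    intro i j hne
    have h1 : L i j * d j = d i * L i j := by
      have := congrFun (congrFun hcomm i) j
      rwa [Matrix.mul_diagonal, Matrix.diagonal_mul] at this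
    by_contra h0
    exact hne (mul_left_cancel₀ h0 (by linarith)).symm
  have hL' : (L.submatrix (Subtype.val : {i // d i = t} → n) Subtype.val) *
      (L.submatrix Subtype.val Subtype.val) = (-1 : Matrix {i // d i = t} {i // d i = t} ℝ) := by
    ext a b
    rw [Matrix.mul_apply]
    simp only [Matrix.submatrix_apply]
    have hfull := congrFun (congrFun hL a.1) b.1
    rw [Matrix.mul_apply] at hfull
    have hsum : ∑ j : {i // d i = t}, L a.1 j.1 * L j.1 b.1
        = ∑ j ∈ Finset.univ.filter (fun j => d j = t), L a.1 j * L j b.1 :=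
      (Finset.sum_subtype (Finset.univ.filter (fun j => d j = t))
        (by simp) (fun j => L a.1 j * L j b.1)).symm
    have hext : ∑ j ∈ Finset.univ.filter (fun j => d j = t), L a.1 j * L j b.1
        = ∑ j, L a.1 j * L j b.1 := by
      apply Finset.sum_subset (Finset.filter_subset _ _)
      intro j _ hj
      simp only [Finset.mem_filter, Finset.mem_univ, true_and] at hj
      have : L a.1 j = 0 := hzero a.1 j (by rw [a.2]; exact fun h => hj h.symm)
      rw [this, zero_mul]
    rw [hsum, hext, hfull]
    by_cases hab : a = b
    · subst hab
      simp
    · have h1 : a.1 ≠ b.1 := fun h => hab (Subtype.ext h)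
      simp [Matrix.neg_apply, Matrix.one_apply, h1, hab]
  have := even_card_of_sq_eq_neg_one _ hL'
  rwa [Fintype.card_subtype] at this

/-- A multiset of reals of size 4 in which every element has even multiplicity is
of the form `{a, a, b, b}`. -/
lemma multiset_four (m : Multiset ℝ) (hcard : Multiset.card m = 4)
    (heven : ∀ t, Even (m.count t)) : ∃ a b, m = {a, a, b, b} := by
  classical
  have hm : m ≠ 0 := by intro h; simp [h] at hcard
  obtain ⟨a, ha⟩ := Multiset.exists_mem_of_ne_zero hm
  have h2 : 2 ≤ m.count a := by
    have h1 : 1 ≤ m.count a := Multiset.one_le_count_iff_mem.mpr ha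
    obtain ⟨k, hk⟩ := heven a
    omega
  have hle : Multiset.replicate 2 a ≤ m := Multiset.le_count_iff_replicate_le.mp h2
  set m' := m - Multiset.replicate 2 a with hm'def
  have hsum : m' + Multiset.replicate 2 a = m := tsub_add_cancel_of_le hle
  have hcard' : Multiset.card m' = 2 := by
    have := congrArg Multiset.card hsum
    rw [Multiset.card_add, Multiset.card_replicate, hcard] at this
    omega
  have hm'ne : m' ≠ 0 := by intro h; simp [h] at hcard'
  obtain ⟨b, hb⟩ := Multiset.exists_mem_of_ne_zero hm'ne
  have hcountb : m.count b = m'.count b + (Multiset.replicate 2 a).count b := by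
    rw [← hsum, Multiset.count_add]
  have hb2 : 2 ≤ m'.count b := by
    have h1 : 1 ≤ m'.count b := Multiset.one_le_count_iff_mem.mpr hb
    rw [Multiset.count_replicate] at hcountb
    by_cases hba : b = a
    · subst hba
      obtain ⟨k, hk⟩ := heven b
      simp at hcountb
      omega
    · obtain ⟨k, hk⟩ := heven b
      rw [if_neg (fun h => hba h.symm)] at hcountb
      omega
  have hrep : Multiset.replicate 2 b ≤ m' := Multiset.le_count_iff_replicate_le.mp hb2
  have hm'eq : Multiset.replicate 2 b = m' :=
    Multiset.eq_of_le_of_card_le hrep (by rw [hcard', Multiset.card_replicate])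
  refine ⟨b, a, ?_⟩
  rw [← hsum, ← hm'eq]
  rfl

end Aux

/-- For a linear almost complex structure `J` on `ℝ⁴` (`J² = −I₄`) and two
`J`-compatible symmetric positive definite matrices `g`, `g'`, the characteristic
polynomial of `g⁻¹g'` is `((X − λ₁)(X − λ₂))²` for some reals `λ₁ ≥ λ₂ > 0`;
in particular every eigenvalue of `g⁻¹g'` is a positive real with even algebraic
multiplicity. -/
theorem charpoly_eq_sq_of_compat (J g g' : Matrix (Fin 4) (Fin 4) ℝ)
    (hJ2 : J * J = -1)
    (hg_symm : g.IsSymm) (hg : g.PosDef) (hJg : Jᵀ * g * J = g)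
    (hg'_symm : g'.IsSymm) (hg' : g'.PosDef) (hJg' : Jᵀ * g' * J = g') :
    ∃ l₁ l₂ : ℝ, l₂ ≤ l₁ ∧ 0 < l₂ ∧
      (g⁻¹ * g').charpoly =
        ((Polynomial.X - Polynomial.C l₁) * (Polynomial.X - Polynomial.C l₂)) ^ 2 := by
  classical
  have hgdet : IsUnit g.det := isUnit_iff_ne_zero.mpr hg.det_pos.ne'
  -- commutation of A := g⁻¹ * g' with J
  have hgJ : g * J = -(Jᵀ * g) := by
    calc g * J = (Jᵀ * g * J) * J := by rw [hJg]
    _ = Jᵀ * g * (J * J) := by rw [Matrix.mul_assoc]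
    _ = -(Jᵀ * g) := by rw [hJ2, Matrix.mul_neg, Matrix.mul_one]
  have hg'J : g' * J = -(Jᵀ * g') := by
    calc g' * J = (Jᵀ * g' * J) * J := by rw [hJg']
    _ = Jᵀ * g' * (J * J) := by rw [Matrix.mul_assoc]
    _ = -(Jᵀ * g') := by rw [hJ2, Matrix.mul_neg, Matrix.mul_one]
  have hJginv : J * g⁻¹ = -(g⁻¹ * Jᵀ) := by
    calc J * g⁻¹ = (g⁻¹ * g) * J * g⁻¹ := by
          rw [Matrix.nonsing_inv_mul g hgdet, Matrix.one_mul]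
    _ = g⁻¹ * (g * J) * g⁻¹ := by rw [Matrix.mul_assoc g⁻¹ g J]
    _ = -(g⁻¹ * Jᵀ * (g * g⁻¹)) := by
          rw [hgJ, Matrix.mul_neg, Matrix.neg_mul]
          simp only [Matrix.mul_assoc]
    _ = -(g⁻¹ * Jᵀ) := by rw [Matrix.mul_nonsing_inv g hgdet, Matrix.mul_one]
  have hAJ : (g⁻¹ * g') * J = J * (g⁻¹ * g') := by
    calc (g⁻¹ * g') * J = g⁻¹ * (g' * J) := by rw [Matrix.mul_assoc]
    _ = -(g⁻¹ * (Jᵀ * g')) := by rw [hg'J, Matrix.mul_neg]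
    _ = (-(g⁻¹ * Jᵀ)) * g' := by rw [Matrix.neg_mul, Matrix.mul_assoc]
    _ = (J * g⁻¹) * g' := by rw [← hJginv]
    _ = J * (g⁻¹ * g') := by rw [Matrix.mul_assoc]
  -- square root of g
  set R : Matrix (Fin 4) (Fin 4) ℝ := CFC.sqrt g with hRdef
  have hRR : R * R = g := CFC.sqrt_mul_sqrt_self g hg.posSemidef.nonneg
  have hRdet : IsUnit R.det := by
    rw [isUnit_iff_ne_zero]
    intro h
    have : g.det = 0 := by rw [← hRR, det_mul, h, zero_mul]
    exact hg.det_pos.ne' this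
  have hRUnitM : IsUnit R := (Matrix.isUnit_iff_isUnit_det R).2 hRdet
  have hRH : R.IsHermitian := (Matrix.nonneg_iff_posSemidef.mp (CFC.sqrt_nonneg g)).1
  set S : Matrix (Fin 4) (Fin 4) ℝ := R⁻¹ * g' * R⁻¹ with hSdef
  -- S is positive definite
  have hSposdef : S.PosDef := by
    have h1 : (R⁻¹)ᴴ * g' * R⁻¹ = S := by rw [hRH.inv.eq]
    refine Matrix.PosDef.of_dotProduct_mulVec_pos ?_ ?_
    · rw [← h1]
      exact Matrix.isHermitian_conjTranspose_mul_mul _ hg'.1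
    · intro x hx
      have hx' : R⁻¹ *ᵥ x ≠ 0 := by
        intro h
        apply hx
        have h2 := congrArg (fun v => R *ᵥ v) h
        simp only [Matrix.mulVec_mulVec, Matrix.mulVec_zero] at h2
        rwa [Matrix.mul_nonsing_inv R hRdet, Matrix.one_mulVec] at h2
      have hpos := hg'.dotProduct_mulVec_pos hx'
      rw [← h1]
      rw [← Matrix.mulVec_mulVec, ← Matrix.mulVec_mulVec, Matrix.dotProduct_mulVec,
        ← Matrix.star_mulVec]
      exact hpos
  -- g⁻¹ * g' is conjugate to S
  have hSA : S = R * (g⁻¹ * g') * R⁻¹ := by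
    rw [← hRR, Matrix.mul_inv_rev]
    calc R⁻¹ * g' * R⁻¹ = (R * R⁻¹) * (R⁻¹ * g' * R⁻¹) := by
          rw [Matrix.mul_nonsing_inv R hRdet, Matrix.one_mul]
    _ = R * (R⁻¹ * R⁻¹ * g') * R⁻¹ := by
          simp only [Matrix.mul_assoc]
  have hcp1 : (g⁻¹ * g').charpoly = S.charpoly := by
    rw [hSA]
    exact (my_charpoly_conj R _ hRUnitM).symm
  -- the conjugated complex structure K
  set K : Matrix (Fin 4) (Fin 4) ℝ := R * J * R⁻¹ with hKdef
  have hRinvR : R⁻¹ * R = 1 := Matrix.nonsing_inv_mul R hRdet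
  have hKK : K * K = -1 := by
    have h0 : K * K = R * (J * ((R⁻¹ * R) * (J * R⁻¹))) := by
      simp only [hKdef, Matrix.mul_assoc]
    rw [h0, hRinvR, Matrix.one_mul, ← Matrix.mul_assoc J J, hJ2, Matrix.neg_mul,
      Matrix.one_mul, Matrix.mul_neg, Matrix.mul_nonsing_inv R hRdet]
  have hKS : K * S = S * K := by
    have h1 : K * S = R * (J * ((R⁻¹ * R) * ((g⁻¹ * g') * R⁻¹))) := by
      rw [hSA]; simp only [hKdef, Matrix.mul_assoc]
    have h2 : S * K = R * ((g⁻¹ * g') * ((R⁻¹ * R) * (J * R⁻¹))) := by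
      rw [hSA]; simp only [hKdef, Matrix.mul_assoc]
    rw [h1, h2, hRinvR, Matrix.one_mul, Matrix.one_mul, ← Matrix.mul_assoc J, ← hAJ]
    simp only [Matrix.mul_assoc]
  -- spectral theorem for S
  have hSH : S.IsHermitian := hSposdef.1
  set d : Fin 4 → ℝ := hSH.eigenvalues with hddef
  set Uv : Matrix (Fin 4) (Fin 4) ℝ := (hSH.eigenvectorUnitary : Matrix (Fin 4) (Fin 4) ℝ)
    with hUdef
  have hU1 : star Uv * Uv = 1 := Matrix.mem_unitaryGroup_iff'.mp hSH.eigenvectorUnitary.2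
  have hU2 : Uv * star Uv = 1 := Matrix.mem_unitaryGroup_iff.mp hSH.eigenvectorUnitary.2
  have hdiag : star Uv * S * Uv = diagonal d := by
    have h := hSH.conjStarAlgAut_star_eigenvectorUnitary
    simp only [Unitary.conjStarAlgAut_apply, Unitary.coe_star, star_star] at h
    rw [h]
    congr 1
  have hUunit : IsUnit (star Uv) := by
    rw [Matrix.isUnit_iff_isUnit_det]
    rw [isUnit_iff_ne_zero]
    intro h
    have : (1 : Matrix (Fin 4) (Fin 4) ℝ).det = 0 := by
      rw [← hU1, det_mul, h, zero_mul]
    simp at this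
  have hUinv : (star Uv)⁻¹ = Uv := Matrix.inv_eq_right_inv hU1
  have hcp2 : S.charpoly = (diagonal d).charpoly := by
    have h := my_charpoly_conj (star Uv) S hUunit
    rw [hUinv, hdiag] at h
    exact h.symm
  set L : Matrix (Fin 4) (Fin 4) ℝ := star Uv * K * Uv with hLdef
  have hconjmul : ∀ A B : Matrix (Fin 4) (Fin 4) ℝ,
      (star Uv * A * Uv) * (star Uv * B * Uv) = star Uv * (A * B) * Uv := by
    intro A B
    have h3 : Uv * (star Uv * (B * Uv)) = B * Uv := by
      rw [← Matrix.mul_assoc, hU2, Matrix.one_mul]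
    simp only [Matrix.mul_assoc]
    rw [h3]
  have hLL : L * L = -1 := by
    rw [hLdef, hconjmul K K, hKK]
    simp only [Matrix.mul_neg, Matrix.neg_mul, Matrix.mul_one]
    rw [hU1]
  have hLD : L * diagonal d = diagonal d * L := by
    rw [← hdiag, hLdef, hconjmul, hconjmul, hKS]
  have heven : ∀ t, Even ((Finset.univ.filter (fun i => d i = t)).card) :=
    even_card_level_set d L hLL hLD
  set m : Multiset ℝ := Multiset.map d Finset.univ.val with hmdef
  have hm4 : Multiset.card m = 4 := by simp [hmdef]
  have hmeven : ∀ t, Even (m.count t) := by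
    intro t
    have hc : m.count t = (Finset.univ.filter (fun i => t = d i)).card := by
      rw [hmdef, Multiset.count_map]
      rfl
    have hfe : (Finset.univ.filter (fun i => t = d i))
        = (Finset.univ.filter (fun i => d i = t)) := by
      apply Finset.filter_congr
      intro x _
      constructor <;> (intro h; exact h.symm)
    rw [hc, hfe]
    exact heven t
  obtain ⟨a, b, hmeq⟩ := multiset_four m hm4 hmeven
  have hpos : ∀ x ∈ m, (0:ℝ) < x := by
    intro x hx
    obtain ⟨i, _, rfl⟩ := Multiset.mem_map.mp hx
    exact hSposdef.eigenvalues_pos i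
  have hamem : a ∈ m := by rw [hmeq]; simp
  have hbmem : b ∈ m := by rw [hmeq]; simp
  have ha : (0:ℝ) < a := hpos a hamem
  have hb : (0:ℝ) < b := hpos b hbmem
  have hdiagcp : (diagonal d).charpoly
      = (Multiset.map (fun t => Polynomial.X - Polynomial.C t) m).prod := by
    rw [Matrix.charpoly_of_upperTriangular (diagonal d) (Matrix.blockTriangular_diagonal d)]
    rw [hmdef, Multiset.map_map, Finset.prod_eq_multiset_prod]
    simp only [Matrix.diagonal_apply_eq]
    rfl
  refine ⟨max a b, min a b, min_le_max, lt_min ha hb, ?_⟩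
  rw [hcp1, hcp2, hdiagcp, hmeq]
  simp only [Multiset.insert_eq_cons, Multiset.map_cons, Multiset.prod_cons,
    Multiset.map_singleton, Multiset.prod_singleton]
  rcases le_total a b with h | h
  · rw [max_eq_right h, min_eq_left h]
    ring
  · rw [max_eq_left h, min_eq_right h]
    ring
end
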